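/- Suppose M_r ∈ ℝ^{ρ_r×p} and M_c ∈ ℝ^{n×ρ_c} satisfy the RIP with constant δ ∈ (0,1): (1−δ)‖Y‖_F² ≤ (np/(ρ_r ρ_c)) ‖M_r Y M_c‖_F² ≤ (1+δ)‖Y‖_F² for all Y ∈ LR(P_{k_r}, Q_{k_c}). Assume λ_{k_c+1} > 0 and λ_{k_r+1} > 0, let γ > 0, and set γ̄_c = γ/λ_{k_c+1}, γ̄_r = γ/λ_{k_r+1}. Let X̄ ∈ LR(P_{k_r}, Q_{k_c}), Ẽ ∈ ℝ^{ρ_r×ρ_c}, X̃ = M_r X̄ M_c + Ẽ, and let X* be a minimizer over X ∈ ℝ^{p×n} of ‖M_r X M_c − X̃‖_F² + γ̄_c tr(X L_c X^⊤) + γ̄_r tr(X^⊤ L_r X). With X̄* = P_{k_r} P_{k_r}^⊤ X* Q_{k_c} Q_{k_c}^⊤ and E* = X* − X̄*, one has ‖E*‖_F ≤ ‖Ẽ‖_F/√(2γ) + (1/√2) √(λ_{k_c}/λ_{k_c+1} + λ_{k_r}/λ_{k_r+1}) ‖X̄‖_F. -/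

import Mathlib

open Matrix

/-- Frobenius norm of a real matrix. -/
noncomputable def frobNorm {m n : Type*} [Fintype m] [Fintype n] (A : Matrix m n ℝ) : ℝ :=
  Real.sqrt (∑ i, ∑ j, (A i j) ^ 2)

/-- Euclidean norm of a real vector. -/
noncomputable def vecNorm {n : Type*} [Fintype n] (x : n → ℝ) : ℝ :=
  Real.sqrt (∑ i, (x i) ^ 2)

/-- A row-selection matrix: its rows are distinct standard basis vectors of `ℝ^p`. -/
def IsRowSelection {ρ p : ℕ} (M : Matrix (Fin ρ) (Fin p) ℝ) : Prop :=
  ∃ f : Fin ρ → Fin p, Function.Injective f ∧ ∀ i j, M i j = if j = f i then 1 else 0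

/-- A column-selection matrix: its columns are distinct standard basis vectors of `ℝ^n`. -/
def IsColSelection {n ρ : ℕ} (M : Matrix (Fin n) (Fin ρ) ℝ) : Prop :=
  ∃ f : Fin ρ → Fin n, Function.Injective f ∧ ∀ i j, M i j = if i = f j then 1 else 0

/-- `y` lies in the span of the columns of `P`. -/
def inColSpan {p k : ℕ} (P : Matrix (Fin p) (Fin k) ℝ) (y : Fin p → ℝ) : Prop :=
  ∃ c : Fin k → ℝ, y = P.mulVec c

/-- `Y ∈ LR(P, Q)`: every column of `Y` lies in the column span of `P` and every row of `Y`
lies in the column span of `Q`. -/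
def memLR {p n kr kc : ℕ} (P : Matrix (Fin p) (Fin kr) ℝ) (Q : Matrix (Fin n) (Fin kc) ℝ)
    (Y : Matrix (Fin p) (Fin n) ℝ) : Prop :=
  (∀ j, inColSpan P (fun i => Y i j)) ∧ (∀ i, inColSpan Q (fun j => Y i j))

/-- Graph cumulative coherence `ν = max_i √n ‖Q^⊤ e_i‖₂`. -/
noncomputable def coherence {n k : ℕ} (Q : Matrix (Fin n) (Fin k) ℝ) : ℝ :=
  ⨆ i : Fin n, Real.sqrt n * vecNorm (fun j => Q i j)

set_option maxHeartbeats 4000000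

theorem sum_castLE' {p kr : ℕ} (hkr0 : 0 < kr) (h : kr ≤ p) (g : Fin p → ℝ) :
    ∑ m : Fin kr, g (Fin.castLE h m) = ∑ j : Fin p, if (j:ℕ) < kr then g j else 0 := by
  classical
  rw [← Finset.sum_filter]
  apply Finset.sum_nbij' (i := fun m => Fin.castLE h m)
    (j := fun j => (⟨(j:ℕ) % kr, Nat.mod_lt _ hkr0⟩ : Fin kr))
  · intro m _; simp [Fin.castLE]
  · intro j _; simp
  · intro m _; ext; simp [Fin.castLE, Nat.mod_eq_of_lt m.isLt]
  · intro j hj; simp at hj; ext; simp [Fin.castLE, Nat.mod_eq_of_lt hj]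
  · intro m _; rfl

theorem proj_eq {p kr : ℕ} (hkr0 : 0 < kr) (hkr : kr ≤ p) (P : Matrix (Fin p) (Fin p) ℝ)
    (Pk : Matrix (Fin p) (Fin kr) ℝ) (hPk : Pk = P.submatrix id (Fin.castLE hkr)) :
    Pk * Pkᵀ = P * Matrix.diagonal (fun i : Fin p => if (i:ℕ) < kr then (1:ℝ) else 0) * Pᵀ := by
  ext a b
  have lhs : (Pk * Pkᵀ) a b = ∑ m : Fin kr, (fun j => P a j * P b j) (Fin.castLE hkr m) := by
    simp [hPk, Matrix.mul_apply]
  rw [lhs, sum_castLE' hkr0 hkr (fun j => P a j * P b j)]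
  conv_rhs => rw [Matrix.mul_apply]
  simp only [Matrix.mul_diagonal, Matrix.transpose_apply]
  refine Finset.sum_congr rfl fun j _ => ?_
  split_ifs <;> ring

theorem frob_sq {m n : Type*} [Fintype m] [Fintype n] (A : Matrix m n ℝ) :
    frobNorm A ^ 2 = ∑ i, ∑ j, (A i j) ^ 2 := by
  apply Real.sq_sqrt
  positivity

theorem frob_nonneg {m n : Type*} [Fintype m] [Fintype n] (A : Matrix m n ℝ) :
    0 ≤ frobNorm A := Real.sqrt_nonneg _

theorem sq_expand {m n : Type*} [Fintype m] [Fintype n] (A B : Matrix m n ℝ) (t : ℝ) :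
    ∑ i, ∑ j, ((A + t • B) i j) ^ 2 =
      (∑ i, ∑ j, (A i j)^2) + t * (2 * ∑ i, ∑ j, A i j * B i j) + t^2 * ∑ i, ∑ j, (B i j)^2 := by
  simp only [Finset.mul_sum, ← Finset.sum_add_distrib]
  refine Finset.sum_congr rfl fun i _ => Finset.sum_congr rfl fun j _ => ?_
  simp [Matrix.add_apply, Matrix.smul_apply]
  ring

theorem trace_quad_expand_c {p n : Type*} [Fintype p] [Fintype n] [DecidableEq p] [DecidableEq n]
    (X H : Matrix p n ℝ) (L : Matrix n n ℝ) (t : ℝ) :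
    Matrix.trace ((X + t • H) * L * (X + t • H)ᵀ) =
      Matrix.trace (X * L * Xᵀ)
        + t * (Matrix.trace (X * L * Hᵀ) + Matrix.trace (H * L * Xᵀ))
        + t^2 * Matrix.trace (H * L * Hᵀ) := by
  simp only [Matrix.transpose_add, Matrix.transpose_smul, Matrix.add_mul, Matrix.mul_add,
    Matrix.smul_mul, Matrix.mul_smul, Matrix.trace_add, Matrix.trace_smul, smul_eq_mul,
    smul_smul]
  ring

theorem trace_quad_expand_r {p n : Type*} [Fintype p] [Fintype n] [DecidableEq p] [DecidableEq n]
    (X H : Matrix p n ℝ) (L : Matrix p p ℝ) (t : ℝ) :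
    Matrix.trace ((X + t • H)ᵀ * L * (X + t • H)) =
      Matrix.trace (Xᵀ * L * X)
        + t * (Matrix.trace (Xᵀ * L * H) + Matrix.trace (Hᵀ * L * X))
        + t^2 * Matrix.trace (Hᵀ * L * H) := by
  simp only [Matrix.transpose_add, Matrix.transpose_smul, Matrix.add_mul, Matrix.mul_add,
    Matrix.smul_mul, Matrix.mul_smul, Matrix.trace_add, Matrix.trace_smul, smul_eq_mul,
    smul_smul]
  ring

theorem trace_PMP {p : ℕ} (P M : Matrix (Fin p) (Fin p) ℝ) (hPPT : P * Pᵀ = 1) :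
    Matrix.trace (Pᵀ * M * P) = Matrix.trace M := by
  rw [Matrix.trace_mul_comm, ← Matrix.mul_assoc, hPPT, Matrix.one_mul]

theorem trace_ADA {p n : ℕ} (A : Matrix (Fin p) (Fin n) ℝ) (ev : Fin n → ℝ) :
    Matrix.trace (A * Matrix.diagonal ev * Aᵀ) = ∑ i, ∑ k, ev k * (A i k) ^ 2 := by
  simp only [Matrix.trace, Matrix.diag, Matrix.mul_apply, Matrix.transpose_apply]
  refine Finset.sum_congr rfl fun i _ => Finset.sum_congr rfl fun k _ => ?_
  simp [Matrix.diagonal]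
  ring

theorem trace_ATDA {p n : ℕ} (A : Matrix (Fin p) (Fin n) ℝ) (ev : Fin p → ℝ) :
    Matrix.trace (Aᵀ * Matrix.diagonal ev * A) = ∑ i, ∑ k, ev i * (A i k) ^ 2 := by
  rw [Finset.sum_comm]
  simp only [Matrix.trace, Matrix.diag, Matrix.mul_apply, Matrix.transpose_apply]
  refine Finset.sum_congr rfl fun k _ => Finset.sum_congr rfl fun i _ => ?_
  simp [Matrix.mul_apply, Matrix.diagonal]
  ring

theorem trace_AA {p n : ℕ} (A : Matrix (Fin p) (Fin n) ℝ) :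
    Matrix.trace (A * Aᵀ) = ∑ i, ∑ k, (A i k) ^ 2 := by
  simp [Matrix.trace, Matrix.mul_apply, Matrix.diag, pow_two]

theorem trace_c_coord {p n : ℕ} (P : Matrix (Fin p) (Fin p) ℝ) (Q : Matrix (Fin n) (Fin n) ℝ)
    (hPPT : P * Pᵀ = 1)
    (L : Matrix (Fin n) (Fin n) ℝ) (ev : Fin n → ℝ) (hL : L = Q * Matrix.diagonal ev * Qᵀ)
    (X : Matrix (Fin p) (Fin n) ℝ) :
    Matrix.trace (X * L * Xᵀ) = ∑ i, ∑ k, ev k * ((Pᵀ * X * Q) i k) ^ 2 := by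
  have h1 : (Pᵀ * X * Q) * Matrix.diagonal ev * (Pᵀ * X * Q)ᵀ = Pᵀ * (X * L * Xᵀ) * P := by
    rw [hL]
    simp only [Matrix.transpose_mul, Matrix.transpose_transpose, Matrix.mul_assoc]
  rw [← trace_ADA, h1, trace_PMP _ _ hPPT]

theorem trace_r_coord {p n : ℕ} (P : Matrix (Fin p) (Fin p) ℝ) (Q : Matrix (Fin n) (Fin n) ℝ)
    (hQQT : Q * Qᵀ = 1)
    (L : Matrix (Fin p) (Fin p) ℝ) (ev : Fin p → ℝ) (hL : L = P * Matrix.diagonal ev * Pᵀ)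
    (X : Matrix (Fin p) (Fin n) ℝ) :
    Matrix.trace (Xᵀ * L * X) = ∑ i, ∑ k, ev i * ((Pᵀ * X * Q) i k) ^ 2 := by
  have h1 : (Pᵀ * X * Q)ᵀ * Matrix.diagonal ev * (Pᵀ * X * Q) = Qᵀ * (Xᵀ * L * X) * Q := by
    rw [hL]
    simp only [Matrix.transpose_mul, Matrix.transpose_transpose, Matrix.mul_assoc]
  rw [← trace_ATDA, h1, trace_PMP _ _ hQQT]

theorem sqnorm_coord {p n : ℕ} (P : Matrix (Fin p) (Fin p) ℝ) (Q : Matrix (Fin n) (Fin n) ℝ)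
    (hPPT : P * Pᵀ = 1) (hQQT : Q * Qᵀ = 1) (X : Matrix (Fin p) (Fin n) ℝ) :
    ∑ i, ∑ j, (X i j) ^ 2 = ∑ i, ∑ k, ((Pᵀ * X * Q) i k) ^ 2 := by
  have h1 : (Pᵀ * X * Q) * (Pᵀ * X * Q)ᵀ = Pᵀ * (X * Xᵀ) * P := by
    simp only [Matrix.transpose_mul, Matrix.transpose_transpose, Matrix.mul_assoc,
      ← Matrix.mul_assoc Q, hQQT, Matrix.one_mul]
  rw [← trace_AA X, ← trace_PMP P (X * Xᵀ) hPPT, ← h1, trace_AA]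

theorem sqrt_add_le' (x y : ℝ) (hx : 0 ≤ x) (hy : 0 ≤ y) :
    Real.sqrt (x + y) ≤ Real.sqrt x + Real.sqrt y := by
  rw [show Real.sqrt x + Real.sqrt y = Real.sqrt ((Real.sqrt x + Real.sqrt y)^2) by
    rw [Real.sqrt_sq (by positivity)]]
  apply Real.sqrt_le_sqrt
  nlinarith [Real.sq_sqrt hx, Real.sq_sqrt hy, Real.sqrt_nonneg x, Real.sqrt_nonneg y]

/-- error bound `‖E*‖_F = ‖X* − X̄*‖_F` for the alternate (graph-Dirichlet) decoder.
`L_c`, `L_r` are symmetric PSD with monotone eigenvalue lists `evc`, `evr` and orthonormal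
eigenbases `Q`, `P`; `Q_{k_c}`, `P_{k_r}` are the first `k_c` (resp. `k_r`) columns;
the 1-indexed eigenvalues `λ_{k_c}`, `λ_{k_c+1}` are `evc ⟨k_c−1⟩`, `evc ⟨k_c⟩`
(similarly for `r`). -/
theorem alternate_decoder_error_bound
    (p n ρr ρc kr kc : ℕ) (hkr0 : 0 < kr) (hkr : kr < p) (hkc0 : 0 < kc) (hkc : kc < n)
    (Lr : Matrix (Fin p) (Fin p) ℝ) (Lc : Matrix (Fin n) (Fin n) ℝ)
    (hLr : Lr.PosSemidef) (hLc : Lc.PosSemidef)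
    (evr : Fin p → ℝ) (evc : Fin n → ℝ) (hevr : Monotone evr) (hevc : Monotone evc)
    (P : Matrix (Fin p) (Fin p) ℝ) (Q : Matrix (Fin n) (Fin n) ℝ)
    (hPorth : Pᵀ * P = 1) (hQorth : Qᵀ * Q = 1)
    (hLrP : Lr * P = P * Matrix.diagonal evr)
    (hLcQ : Lc * Q = Q * Matrix.diagonal evc)
    (Pkr : Matrix (Fin p) (Fin kr) ℝ) (hPkr : Pkr = P.submatrix id (Fin.castLE hkr.le))
    (Qkc : Matrix (Fin n) (Fin kc) ℝ) (hQkc : Qkc = Q.submatrix id (Fin.castLE hkc.le))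
    (Mr : Matrix (Fin ρr) (Fin p) ℝ) (hMr : IsRowSelection Mr)
    (Mc : Matrix (Fin n) (Fin ρc) ℝ) (hMc : IsColSelection Mc)
    (δ : ℝ) (hδ : δ ∈ Set.Ioo (0 : ℝ) 1)
    (hRIP : ∀ Y : Matrix (Fin p) (Fin n) ℝ, memLR Pkr Qkc Y →
      (1 - δ) * (frobNorm Y) ^ 2 ≤
        ((n : ℝ) * p / ((ρr : ℝ) * ρc)) * (frobNorm (Mr * Y * Mc)) ^ 2 ∧
      ((n : ℝ) * p / ((ρr : ℝ) * ρc)) * (frobNorm (Mr * Y * Mc)) ^ 2 ≤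
        (1 + δ) * (frobNorm Y) ^ 2)
    (hlamc1 : 0 < evc ⟨kc, hkc⟩) (hlamr1 : 0 < evr ⟨kr, hkr⟩)
    (γ γc γr : ℝ) (hγ : 0 < γ)
    (hγc : γc = γ / evc ⟨kc, hkc⟩) (hγr : γr = γ / evr ⟨kr, hkr⟩)
    (Xbar : Matrix (Fin p) (Fin n) ℝ) (hXbar : memLR Pkr Qkc Xbar)
    (Etil : Matrix (Fin ρr) (Fin ρc) ℝ)
    (Xtil : Matrix (Fin ρr) (Fin ρc) ℝ) (hXtil : Xtil = Mr * Xbar * Mc + Etil)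
    (Xstar : Matrix (Fin p) (Fin n) ℝ)
    (hmin : ∀ X : Matrix (Fin p) (Fin n) ℝ,
      (frobNorm (Mr * Xstar * Mc - Xtil)) ^ 2 + γc * Matrix.trace (Xstar * Lc * Xstarᵀ)
        + γr * Matrix.trace (Xstarᵀ * Lr * Xstar) ≤
      (frobNorm (Mr * X * Mc - Xtil)) ^ 2 + γc * Matrix.trace (X * Lc * Xᵀ)
        + γr * Matrix.trace (Xᵀ * Lr * X))
    (Xbarstar : Matrix (Fin p) (Fin n) ℝ)
    (hXbarstar : Xbarstar = Pkr * Pkrᵀ * Xstar * (Qkc * Qkcᵀ)) :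
    frobNorm (Xstar - Xbarstar) ≤
      frobNorm Etil / Real.sqrt (2 * γ) +
        (1 / Real.sqrt 2) *
          Real.sqrt (evc ⟨kc - 1, by omega⟩ / evc ⟨kc, hkc⟩
            + evr ⟨kr - 1, by omega⟩ / evr ⟨kr, hkr⟩) * frobNorm Xbar := by
  classical
  have hPPT : P * Pᵀ = 1 := mul_eq_one_comm.mp hPorth
  have hQQT : Q * Qᵀ = 1 := mul_eq_one_comm.mp hQorth
  have hLcD : Lc = Q * Matrix.diagonal evc * Qᵀ := by
    calc Lc = Lc * (Q * Qᵀ) := by rw [hQQT, Matrix.mul_one]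
    _ = (Lc * Q) * Qᵀ := by rw [Matrix.mul_assoc]
    _ = Q * Matrix.diagonal evc * Qᵀ := by rw [hLcQ]
  have hLrD : Lr = P * Matrix.diagonal evr * Pᵀ := by
    calc Lr = Lr * (P * Pᵀ) := by rw [hPPT, Matrix.mul_one]
    _ = (Lr * P) * Pᵀ := by rw [Matrix.mul_assoc]
    _ = P * Matrix.diagonal evr * Pᵀ := by rw [hLrP]
  have evc_nonneg : ∀ k, 0 ≤ evc k := by
    intro k
    have hdiag : Matrix.diagonal evc = Qᵀ * (Lc * Q) := by
      rw [hLcQ, ← Matrix.mul_assoc, hQorth, Matrix.one_mul]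
    have h1 : evc k = (Qᵀ * (Lc * Q)) k k := by
      rw [← hdiag]; simp
    have h2 : (Qᵀ * (Lc * Q)) k k
        = (fun b => Q b k) ⬝ᵥ Lc.mulVec (fun b => Q b k) := by
      simp [Matrix.mul_apply, Matrix.transpose_apply, dotProduct, Matrix.mulVec]
    have h0 := hLc.dotProduct_mulVec_nonneg (fun b => Q b k)
    rw [h1, h2]
    simpa using h0
  have evr_nonneg : ∀ i, 0 ≤ evr i := by
    intro k
    have hdiag : Matrix.diagonal evr = Pᵀ * (Lr * P) := by
      rw [hLrP, ← Matrix.mul_assoc, hPorth, Matrix.one_mul]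
    have h1 : evr k = (Pᵀ * (Lr * P)) k k := by
      rw [← hdiag]; simp
    have h2 : (Pᵀ * (Lr * P)) k k
        = (fun b => P b k) ⬝ᵥ Lr.mulVec (fun b => P b k) := by
      simp [Matrix.mul_apply, Matrix.transpose_apply, dotProduct, Matrix.mulVec]
    have h0 := hLr.dotProduct_mulVec_nonneg (fun b => P b k)
    rw [h1, h2]
    simpa using h0
  have hγc_pos : 0 < γc := by rw [hγc]; positivity
  have hγr_pos : 0 < γr := by rw [hγr]; positivity
  set w := Pᵀ * Xstar * Q with hw
  set wb := Pᵀ * Xbar * Q with hwbdef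
  set H := Xbar - Xstar with hH
  have hwH : Pᵀ * H * Q = wb - w := by
    rw [hH, Matrix.mul_sub, Matrix.sub_mul]
  have hent_c : ∀ (a c : Fin n), (∑ j, Q j a * Q j c) = if a = c then (1:ℝ) else 0 := by
    intro a c
    have h := congrFun (congrFun hQorth a) c
    simpa [Matrix.mul_apply, Matrix.transpose_apply, Matrix.one_apply] using h
  have hent_r : ∀ (a c : Fin p), (∑ j, P j a * P j c) = if a = c then (1:ℝ) else 0 := by
    intro a c
    have h := congrFun (congrFun hPorth a) c
    simpa [Matrix.mul_apply, Matrix.transpose_apply, Matrix.one_apply] using h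
  have hwb0 : ∀ (i : Fin p) (k : Fin n), (kr ≤ (i:ℕ) ∨ kc ≤ (k:ℕ)) → wb i k = 0 := by
    intro i k hik
    rcases hik with hik | hik
    · -- use column condition
      have hcol : ∀ a : Fin n, (Pᵀ * Xbar) i a = 0 := by
        intro a
        obtain ⟨c, hc⟩ := hXbar.1 a
        have hXa : ∀ bb, Xbar bb a = ∑ m, P bb (Fin.castLE hkr.le m) * c m := by
          intro bb
          have := congrFun hc bb
          simpa [Matrix.mulVec, dotProduct, hPkr, Matrix.submatrix_apply] using this
        rw [Matrix.mul_apply]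
        have hterm : ∀ bb, Pᵀ i bb * Xbar bb a
            = ∑ m, c m * (P bb (Fin.castLE hkr.le m) * P bb i) := by
          intro bb
          rw [Matrix.transpose_apply, hXa bb, Finset.mul_sum]
          exact Finset.sum_congr rfl fun m _ => by ring
        rw [Finset.sum_congr rfl (fun bb _ => hterm bb), Finset.sum_comm]
        apply Finset.sum_eq_zero
        intro m _
        rw [← Finset.mul_sum, hent_r (Fin.castLE hkr.le m) i, if_neg, mul_zero]
        intro hmi
        have := congrArg Fin.val hmi
        simp [Fin.castLE] at this
        omega
      rw [hwbdef, Matrix.mul_apply]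
      exact Finset.sum_eq_zero fun aIdx _ => by rw [hcol aIdx, zero_mul]
    · -- use row condition
      have hrow : ∀ a : Fin p, (Xbar * Q) a k = 0 := by
        intro a
        obtain ⟨c, hc⟩ := hXbar.2 a
        have hXa : ∀ j, Xbar a j = ∑ m, Q j (Fin.castLE hkc.le m) * c m := by
          intro j
          have := congrFun hc j
          simpa [Matrix.mulVec, dotProduct, hQkc, Matrix.submatrix_apply] using this
        rw [Matrix.mul_apply]
        have hterm : ∀ j, Xbar a j * Q j k
            = ∑ m, c m * (Q j (Fin.castLE hkc.le m) * Q j k) := by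
          intro j
          rw [hXa j, Finset.sum_mul]
          exact Finset.sum_congr rfl fun m _ => by ring
        rw [Finset.sum_congr rfl (fun j _ => hterm j), Finset.sum_comm]
        apply Finset.sum_eq_zero
        intro m _
        rw [← Finset.mul_sum, hent_c (Fin.castLE hkc.le m) k, if_neg, mul_zero]
        intro hmi
        have := congrArg Fin.val hmi
        simp [Fin.castLE] at this
        omega
      rw [hwbdef, Matrix.mul_assoc, Matrix.mul_apply]
      exact Finset.sum_eq_zero fun aIdx _ => by rw [hrow aIdx, mul_zero]
  have hws : ∀ (i : Fin p) (k : Fin n), (Pᵀ * (Xstar - Xbarstar) * Q) i k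
      = w i k - (if (i:ℕ) < kr then (1:ℝ) else 0) * w i k * (if (k:ℕ) < kc then (1:ℝ) else 0) := by
    have hprojr : Pkr * Pkrᵀ
        = P * Matrix.diagonal (fun i : Fin p => if (i:ℕ) < kr then (1:ℝ) else 0) * Pᵀ :=
      proj_eq hkr0 hkr.le P Pkr hPkr
    have hprojc : Qkc * Qkcᵀ
        = Q * Matrix.diagonal (fun k : Fin n => if (k:ℕ) < kc then (1:ℝ) else 0) * Qᵀ :=
      proj_eq hkc0 hkc.le Q Qkc hQkc
    have hwsM : Pᵀ * Xbarstar * Q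
        = Matrix.diagonal (fun i : Fin p => if (i:ℕ) < kr then (1:ℝ) else 0) * w
          * Matrix.diagonal (fun k : Fin n => if (k:ℕ) < kc then (1:ℝ) else 0) := by
      rw [hXbarstar, hprojr, hprojc, hw]
      simp only [Matrix.mul_assoc]
      rw [hQorth, Matrix.mul_one, ← Matrix.mul_assoc, hPorth, Matrix.one_mul]
    intro i k
    rw [Matrix.mul_sub, Matrix.sub_mul, Matrix.sub_apply, hwsM, ← hw]
    simp only [Matrix.mul_diagonal, Matrix.diagonal_mul]
  have htrc : ∀ X : Matrix (Fin p) (Fin n) ℝ,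
      Matrix.trace (X * Lc * Xᵀ) = ∑ i, ∑ k, evc k * ((Pᵀ * X * Q) i k) ^ 2 :=
    fun X => trace_c_coord P Q hPPT Lc evc hLcD X
  have htrr : ∀ X : Matrix (Fin p) (Fin n) ℝ,
      Matrix.trace (Xᵀ * Lr * X) = ∑ i, ∑ k, evr i * ((Pᵀ * X * Q) i k) ^ 2 :=
    fun X => trace_r_coord P Q hQQT Lr evr hLrD X
  set a : ℝ := ∑ i : Fin p, ∑ k : Fin n, (if kr ≤ (i:ℕ) then (w i k)^2 else 0) with ha
  set b : ℝ := ∑ i : Fin p, ∑ k : Fin n, (if kc ≤ (k:ℕ) then (w i k)^2 else 0) with hb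
  set T : ℝ := ∑ i : Fin p, ∑ k : Fin n, (wb i k)^2 with hT
  have ha0 : 0 ≤ a := by
    rw [ha]
    apply Finset.sum_nonneg; intro i _; apply Finset.sum_nonneg; intro k _
    split_ifs <;> positivity
  have hb0 : 0 ≤ b := by
    rw [hb]
    apply Finset.sum_nonneg; intro i _; apply Finset.sum_nonneg; intro k _
    split_ifs <;> positivity
  have hT0 : 0 ≤ T := by rw [hT]; positivity
  have F1 : evc ⟨kc, hkc⟩ * b ≤ Matrix.trace (Xstar * Lc * Xstarᵀ) := by
    rw [htrc Xstar, ← hw, hb, Finset.mul_sum]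
    apply Finset.sum_le_sum
    intro i _
    rw [Finset.mul_sum]
    apply Finset.sum_le_sum
    intro k _
    split_ifs with hk
    · exact mul_le_mul_of_nonneg_right
        (hevc (by simp [Fin.le_def]; omega)) (sq_nonneg _)
    · rw [mul_zero]
      exact mul_nonneg (evc_nonneg k) (sq_nonneg _)
  have F2 : evr ⟨kr, hkr⟩ * a ≤ Matrix.trace (Xstarᵀ * Lr * Xstar) := by
    rw [htrr Xstar, ← hw, ha, Finset.mul_sum]
    apply Finset.sum_le_sum
    intro i _
    rw [Finset.mul_sum]
    apply Finset.sum_le_sum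
    intro k _
    split_ifs with hk
    · exact mul_le_mul_of_nonneg_right
        (hevr (by simp [Fin.le_def]; omega)) (sq_nonneg _)
    · rw [mul_zero]
      exact mul_nonneg (evr_nonneg i) (sq_nonneg _)
  have F3 : evc ⟨kc, hkc⟩ * b ≤ Matrix.trace (H * Lc * Hᵀ) := by
    rw [htrc H, hwH, hb, Finset.mul_sum]
    apply Finset.sum_le_sum
    intro i _
    rw [Finset.mul_sum]
    apply Finset.sum_le_sum
    intro k _
    split_ifs with hk
    · have hz : (wb - w) i k = -(w i k) := by
        rw [Matrix.sub_apply, hwb0 i k (Or.inr hk), zero_sub]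
      rw [hz, neg_sq]
      exact mul_le_mul_of_nonneg_right
        (hevc (by simp [Fin.le_def]; omega)) (sq_nonneg _)
    · rw [mul_zero]
      exact mul_nonneg (evc_nonneg k) (sq_nonneg _)
  have F4 : evr ⟨kr, hkr⟩ * a ≤ Matrix.trace (Hᵀ * Lr * H) := by
    rw [htrr H, hwH, ha, Finset.mul_sum]
    apply Finset.sum_le_sum
    intro i _
    rw [Finset.mul_sum]
    apply Finset.sum_le_sum
    intro k _
    split_ifs with hk
    · have hz : (wb - w) i k = -(w i k) := by
        rw [Matrix.sub_apply, hwb0 i k (Or.inl hk), zero_sub]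
      rw [hz, neg_sq]
      exact mul_le_mul_of_nonneg_right
        (hevr (by simp [Fin.le_def]; omega)) (sq_nonneg _)
    · rw [mul_zero]
      exact mul_nonneg (evr_nonneg i) (sq_nonneg _)
  have F5 : Matrix.trace (Xbar * Lc * Xbarᵀ) ≤ evc ⟨kc - 1, by omega⟩ * T := by
    rw [htrc Xbar, ← hwbdef, hT, Finset.mul_sum]
    apply Finset.sum_le_sum
    intro i _
    rw [Finset.mul_sum]
    apply Finset.sum_le_sum
    intro k _
    by_cases hk : (k:ℕ) < kc
    · exact mul_le_mul_of_nonneg_right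
        (hevc (by simp [Fin.le_def]; omega)) (sq_nonneg _)
    · rw [hwb0 i k (Or.inr (by omega))]
      simp
  have F6 : Matrix.trace (Xbarᵀ * Lr * Xbar) ≤ evr ⟨kr - 1, by omega⟩ * T := by
    rw [htrr Xbar, ← hwbdef, hT, Finset.mul_sum]
    apply Finset.sum_le_sum
    intro i _
    rw [Finset.mul_sum]
    apply Finset.sum_le_sum
    intro k _
    by_cases hik : (i:ℕ) < kr
    · exact mul_le_mul_of_nonneg_right
        (hevr (by simp [Fin.le_def]; omega)) (sq_nonneg _)
    · rw [hwb0 i k (Or.inl (by omega))]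
      simp
  have F7 : frobNorm (Xstar - Xbarstar) ^ 2 ≤ a + b := by
    rw [frob_sq, sqnorm_coord P Q hPPT hQQT (Xstar - Xbarstar), ha, hb]
    simp only [← Finset.sum_add_distrib]
    apply Finset.sum_le_sum
    intro i _
    apply Finset.sum_le_sum
    intro k _
    rw [hws i k]
    split_ifs <;> first | omega | nlinarith [sq_nonneg (w i k)]
  have hTX : frobNorm Xbar ^ 2 = T := by
    rw [frob_sq, hT, hwbdef]
    exact sqnorm_coord P Q hPPT hQQT Xbar
  set D := Mr * Xstar * Mc - Xtil with hD
  set Bm := Mr * H * Mc with hBm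
  set Lt : ℝ := 2 * (∑ i, ∑ j, D i j * Bm i j)
      + γc * (Matrix.trace (Xstar * Lc * Hᵀ) + Matrix.trace (H * Lc * Xstarᵀ))
      + γr * (Matrix.trace (Xstarᵀ * Lr * H) + Matrix.trace (Hᵀ * Lr * Xstar)) with hLt
  set St : ℝ := (∑ i, ∑ j, (Bm i j)^2)
      + γc * Matrix.trace (H * Lc * Hᵀ) + γr * Matrix.trace (Hᵀ * Lr * H) with hSt
  have hexp : ∀ t : ℝ,
      frobNorm (Mr * (Xstar + t • H) * Mc - Xtil) ^ 2
        + γc * Matrix.trace ((Xstar + t • H) * Lc * (Xstar + t • H)ᵀ)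
        + γr * Matrix.trace ((Xstar + t • H)ᵀ * Lr * (Xstar + t • H))
      = (frobNorm (Mr * Xstar * Mc - Xtil) ^ 2
          + γc * Matrix.trace (Xstar * Lc * Xstarᵀ)
          + γr * Matrix.trace (Xstarᵀ * Lr * Xstar)) + t * Lt + t^2 * St := by
    intro t
    have hMM : Mr * (Xstar + t • H) * Mc - Xtil = D + t • Bm := by
      rw [hD, hBm, Matrix.mul_add, Matrix.add_mul, Matrix.mul_smul, Matrix.smul_mul]
      abel
    rw [hMM, ← hD, frob_sq, frob_sq, sq_expand D Bm t,
      trace_quad_expand_c Xstar H Lc t, trace_quad_expand_r Xstar H Lr t, hLt, hSt]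
    ring
  have hq : ∀ t : ℝ, 0 ≤ t * Lt + t^2 * St := by
    intro t
    have h := hmin (Xstar + t • H)
    rw [hexp t] at h
    linarith
  have hSt0 : 0 ≤ St := by
    rw [hSt, htrc H, htrr H]
    have h1 : (0:ℝ) ≤ ∑ i, ∑ j, (Bm i j)^2 := by positivity
    have h2 : (0:ℝ) ≤ ∑ i, ∑ k, evc k * ((Pᵀ * H * Q) i k) ^ 2 := by
      apply Finset.sum_nonneg; intro i _; apply Finset.sum_nonneg; intro k _
      have := evc_nonneg k; positivity
    have h3 : (0:ℝ) ≤ ∑ i, ∑ k, evr i * ((Pᵀ * H * Q) i k) ^ 2 := by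
      apply Finset.sum_nonneg; intro i _; apply Finset.sum_nonneg; intro k _
      have := evr_nonneg i; positivity
    have h4 := mul_nonneg hγc_pos.le h2
    have h5 := mul_nonneg hγr_pos.le h3
    linarith
  have hLt0 : 0 ≤ Lt := by
    by_contra hneg
    push_neg at hneg
    have hden : (0:ℝ) < 2 * St + 2 := by linarith
    set u : ℝ := -Lt / (2 * St + 2) with hu
    have hupos : 0 < u := div_pos (by linarith) hden
    have huL : u * (2 * St + 2) = -Lt := by
      rw [hu]; field_simp
    have hLtval : Lt = -(u * (2 * St + 2)) := by linarith
    have ht := hq u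
    rw [hLtval] at ht
    nlinarith [mul_pos hupos hupos, mul_nonneg (mul_nonneg hupos.le hupos.le) hSt0]
  have hXb1 : Xstar + (1:ℝ) • H = Xbar := by rw [one_smul, hH]; abel
  have hFXbar : frobNorm (Mr * Xbar * Mc - Xtil) ^ 2 = frobNorm Etil ^ 2 := by
    have hneg : Mr * Xbar * Mc - Xtil = -Etil := by rw [hXtil]; abel
    rw [hneg, frob_sq, frob_sq]
    simp
  have hchain : (frobNorm (Mr * Xstar * Mc - Xtil) ^ 2
      + γc * Matrix.trace (Xstar * Lc * Xstarᵀ) + γr * Matrix.trace (Xstarᵀ * Lr * Xstar)) + St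
      ≤ frobNorm Etil ^ 2 + γc * Matrix.trace (Xbar * Lc * Xbarᵀ)
        + γr * Matrix.trace (Xbarᵀ * Lr * Xbar) := by
    have h1 := hexp 1
    rw [hXb1, hFXbar] at h1
    linarith
  have hγab1 : γ * b ≤ γc * Matrix.trace (Xstar * Lc * Xstarᵀ) := by
    have h := mul_le_mul_of_nonneg_left F1 hγc_pos.le
    calc γ * b = γc * (evc ⟨kc, hkc⟩ * b) := by rw [hγc]; field_simp
    _ ≤ _ := h
  have hγab2 : γ * a ≤ γr * Matrix.trace (Xstarᵀ * Lr * Xstar) := by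
    have h := mul_le_mul_of_nonneg_left F2 hγr_pos.le
    calc γ * a = γr * (evr ⟨kr, hkr⟩ * a) := by rw [hγr]; field_simp
    _ ≤ _ := h
  have hγab3 : γ * b ≤ γc * Matrix.trace (H * Lc * Hᵀ) := by
    have h := mul_le_mul_of_nonneg_left F3 hγc_pos.le
    calc γ * b = γc * (evc ⟨kc, hkc⟩ * b) := by rw [hγc]; field_simp
    _ ≤ _ := h
  have hγab4 : γ * a ≤ γr * Matrix.trace (Hᵀ * Lr * H) := by
    have h := mul_le_mul_of_nonneg_left F4 hγr_pos.le
    calc γ * a = γr * (evr ⟨kr, hkr⟩ * a) := by rw [hγr]; field_simp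
    _ ≤ _ := h
  have hSab : γ * (a + b) ≤ St := by
    rw [hSt]
    have h1 : (0:ℝ) ≤ ∑ i, ∑ j, (Bm i j)^2 := by positivity
    linarith
  have hFab : γ * (a + b) ≤ frobNorm (Mr * Xstar * Mc - Xtil) ^ 2
      + γc * Matrix.trace (Xstar * Lc * Xstarᵀ) + γr * Matrix.trace (Xstarᵀ * Lr * Xstar) := by
    have h1 : (0:ℝ) ≤ frobNorm (Mr * Xstar * Mc - Xtil) ^ 2 := by positivity
    linarith
  have key : 2 * γ * (frobNorm (Xstar - Xbarstar) ^ 2)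
      ≤ frobNorm Etil ^ 2
        + γ * (evc ⟨kc - 1, by omega⟩ / evc ⟨kc, hkc⟩) * (frobNorm Xbar ^ 2)
        + γ * (evr ⟨kr - 1, by omega⟩ / evr ⟨kr, hkr⟩) * (frobNorm Xbar ^ 2) := by
    have e5 : γc * Matrix.trace (Xbar * Lc * Xbarᵀ)
        ≤ γ * (evc ⟨kc - 1, by omega⟩ / evc ⟨kc, hkc⟩) * T := by
      have h := mul_le_mul_of_nonneg_left F5 hγc_pos.le
      calc γc * Matrix.trace (Xbar * Lc * Xbarᵀ) ≤ γc * (evc ⟨kc - 1, by omega⟩ * T) := h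
      _ = γ * (evc ⟨kc - 1, by omega⟩ / evc ⟨kc, hkc⟩) * T := by
          rw [hγc]; field_simp
    have e6 : γr * Matrix.trace (Xbarᵀ * Lr * Xbar)
        ≤ γ * (evr ⟨kr - 1, by omega⟩ / evr ⟨kr, hkr⟩) * T := by
      have h := mul_le_mul_of_nonneg_left F6 hγr_pos.le
      calc γr * Matrix.trace (Xbarᵀ * Lr * Xbar) ≤ γr * (evr ⟨kr - 1, by omega⟩ * T) := h
      _ = γ * (evr ⟨kr - 1, by omega⟩ / evr ⟨kr, hkr⟩) * T := by
          rw [hγr]; field_simp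
    rw [hTX]
    have hE2 := mul_le_mul_of_nonneg_left F7 (by positivity : (0:ℝ) ≤ 2 * γ)
    linarith
  -- final square-root manipulations
  have h2γ : (0:ℝ) < 2 * γ := by linarith
  have hE0 : 0 ≤ frobNorm (Xstar - Xbarstar) := frob_nonneg _
  have he10 : 0 ≤ frobNorm Etil := frob_nonneg _
  have hx10 : 0 ≤ frobNorm Xbar := frob_nonneg _
  have hrc0 : (0:ℝ) ≤ evc ⟨kc - 1, by omega⟩ / evc ⟨kc, hkc⟩ :=
    div_nonneg (evc_nonneg _) hlamc1.le
  have hrr0 : (0:ℝ) ≤ evr ⟨kr - 1, by omega⟩ / evr ⟨kr, hkr⟩ :=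
    div_nonneg (evr_nonneg _) hlamr1.le
  set rc : ℝ := evc ⟨kc - 1, by omega⟩ / evc ⟨kc, hkc⟩ with hrc
  set rr : ℝ := evr ⟨kr - 1, by omega⟩ / evr ⟨kr, hkr⟩ with hrr
  have hsq : frobNorm (Xstar - Xbarstar) ^ 2
      ≤ frobNorm Etil ^ 2 / (2 * γ) + (rc + rr) / 2 * (frobNorm Xbar ^ 2) := by
    rw [← sub_nonneg]
    have hid : frobNorm Etil ^ 2 / (2 * γ) + (rc + rr) / 2 * (frobNorm Xbar ^ 2)
        - frobNorm (Xstar - Xbarstar) ^ 2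
        = (frobNorm Etil ^ 2 + γ * rc * (frobNorm Xbar ^ 2) + γ * rr * (frobNorm Xbar ^ 2)
            - 2 * γ * (frobNorm (Xstar - Xbarstar) ^ 2)) / (2 * γ) := by
      field_simp
      ring
    rw [hid]
    apply div_nonneg _ h2γ.le
    have := key
    linarith
  have hstep : frobNorm (Xstar - Xbarstar)
      ≤ frobNorm Etil / Real.sqrt (2 * γ)
        + 1 / Real.sqrt 2 * Real.sqrt (rc + rr) * frobNorm Xbar := by
    calc frobNorm (Xstar - Xbarstar)
        = Real.sqrt (frobNorm (Xstar - Xbarstar) ^ 2) := (Real.sqrt_sq hE0).symm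
      _ ≤ Real.sqrt (frobNorm Etil ^ 2 / (2 * γ)
            + (rc + rr) / 2 * (frobNorm Xbar ^ 2)) := Real.sqrt_le_sqrt hsq
      _ ≤ Real.sqrt (frobNorm Etil ^ 2 / (2 * γ))
            + Real.sqrt ((rc + rr) / 2 * (frobNorm Xbar ^ 2)) :=
          sqrt_add_le' _ _ (by positivity)
            (mul_nonneg (div_nonneg (add_nonneg hrc0 hrr0) (by norm_num)) (by positivity))
      _ = frobNorm Etil / Real.sqrt (2 * γ)
            + 1 / Real.sqrt 2 * Real.sqrt (rc + rr) * frobNorm Xbar := by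
          rw [Real.sqrt_div (sq_nonneg _), Real.sqrt_sq he10,
            Real.sqrt_mul (div_nonneg (add_nonneg hrc0 hrr0) (by norm_num)),
            Real.sqrt_sq hx10, Real.sqrt_div (add_nonneg hrc0 hrr0)]
          ring
  exact hstep
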